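/- Every finite groupoid with minimal spectrum is either commutative or anticommutative (i.e., xy = yx implies x = y). -/

import Mathlib

structure MSignature where
  ops : Type
  arity : ops → ℕ

inductive MTerm (σ : MSignature) (k : ℕ) : Type where
  | var : Fin k → MTerm σ k
  | app : (f : σ.ops) → (Fin (σ.arity f) → MTerm σ k) → MTerm σ k

def MTerm.eval {σ : MSignature} {A : Type*}
    (interp : (f : σ.ops) → (Fin (σ.arity f) → A) → A) {k : ℕ} :
    MTerm σ k → (Fin k → A) → A
  | .var i, x => x i
  | .app f ts, x => interp f fun i => (ts i).eval interp x

/-- Probability of the equation `t ≈ t'` in the algebra `(A, interp)`. -/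
noncomputable def eqProb {σ : MSignature} (A : Type*)
    (interp : (f : σ.ops) → (Fin (σ.arity f) → A) → A) {k : ℕ}
    (t t' : MTerm σ k) : ℚ :=
  (Nat.card {x : Fin k → A // t.eval interp x = t'.eval interp x} : ℚ) /
    (Nat.card A : ℚ) ^ k

/-- The equational probability spectrum of the algebra `(A, interp)`. -/
noncomputable def PSpecA {σ : MSignature} (A : Type*)
    (interp : (f : σ.ops) → (Fin (σ.arity f) → A) → A) : Set ℚ :=
  { q | ∃ (k : ℕ) (t t' : MTerm σ k), q = eqProb A interp t t' }

/-- `(A, interp)` has minimal spectrum: every equation has probability `1` or `1/|A|`. -/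
def MinimalSpectrum {σ : MSignature} (A : Type*)
    (interp : (f : σ.ops) → (Fin (σ.arity f) → A) → A) : Prop :=
  ∀ (k : ℕ) (t t' : MTerm σ k),
    eqProb A interp t t' = 1 ∨ eqProb A interp t t' = 1 / (Nat.card A : ℚ)

/-- The signature of groupoids: one binary operation. -/
@[reducible] def grpdSig : MSignature := ⟨Unit, fun _ => 2⟩

def grpdInterp {A : Type*} (mul : A → A → A) :
    (f : grpdSig.ops) → (Fin (grpdSig.arity f) → A) → A :=
  fun _ x => mul (x 0) (x 1)

/-- A permutation is isocyclic if it is the identity or has cycle type `(1, a, …, a)`. -/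
def IsIsocyclic {A : Type*} (f : A → A) : Prop :=
  Function.Bijective f ∧
    (f = id ∨ ∃ a, 1 < a ∧ (∃! x, f x = x) ∧
      ∀ x, f x ≠ x → Function.minimalPeriod f x = a)

theorem stmt9 {A : Type*} [Fintype A] (mul : A → A → A)
    (hmin : MinimalSpectrum A (grpdInterp mul)) :
    (∀ x y : A, mul x y = mul y x) ∨ (∀ x y : A, mul x y = mul y x → x = y) := by
  classical
  rcases isEmpty_or_nonempty A with hA | hA
  · exact Or.inl fun x y => (IsEmpty.false x).elim
  set n : ℕ := Nat.card A with hn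
  have hn0 : 0 < n := Nat.card_pos
  set t : MTerm grpdSig 2 := .app () ![.var 0, .var 1] with ht
  set t' : MTerm grpdSig 2 := .app () ![.var 1, .var 0] with ht'
  have heval : ∀ x : Fin 2 → A,
      (t.eval (grpdInterp mul) x = t'.eval (grpdInterp mul) x) ↔
        mul (x 0) (x 1) = mul (x 1) (x 0) := by
    intro x
    simp [ht, ht', MTerm.eval, grpdInterp]
  set P : (Fin 2 → A) → Prop := fun x =>
    t.eval (grpdInterp mul) x = t'.eval (grpdInterp mul) x with hP
  have hcard : Nat.card {x : Fin 2 → A // P x} = Fintype.card {x : Fin 2 → A // P x} :=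
    Nat.card_eq_fintype_card
  have hprob : eqProb A (grpdInterp mul) t t'
      = (Fintype.card {x : Fin 2 → A // P x} : ℚ) / (n : ℚ) ^ 2 := by
    rw [eqProb, hcard, hn]
  have hnQ : ((n : ℚ)) ≠ 0 := by exact_mod_cast hn0.ne'
  rcases hmin 2 t t' with h | h
  · -- probability 1: commutative
    left
    have hcount : (Fintype.card {x : Fin 2 → A // P x} : ℚ) = (n : ℚ) ^ 2 := by
      rw [hprob] at h
      field_simp at h
      linarith [h]
    have hcount' : Fintype.card {x : Fin 2 → A // P x} = Fintype.card (Fin 2 → A) := by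
      have : (n : ℚ) ^ 2 = ((Fintype.card (Fin 2 → A) : ℕ) : ℚ) := by
        simp [hn, Nat.card_eq_fintype_card, Fintype.card_fun, pow_two]
      exact_mod_cast hcount.trans this
    have hall : ∀ x : Fin 2 → A, P x := by
      by_contra hc
      push_neg at hc
      obtain ⟨x, hx⟩ := hc
      exact absurd hcount' (Nat.ne_of_lt (Fintype.card_subtype_lt (x := x) hx))
    intro x y
    have := (heval ![x, y]).mp (hall ![x, y])
    simpa using this
  · -- probability 1/n: anticommutative
    right
    have hcount : (Fintype.card {x : Fin 2 → A // P x} : ℚ) = (n : ℚ) := by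
      rw [hprob] at h
      field_simp at h
      have hnf : ((Fintype.card A : ℕ) : ℚ) = (n : ℚ) := by
        simp [hn, Nat.card_eq_fintype_card]
      rw [← hn] at h
      have h2 : ((Fintype.card {x : Fin 2 → A // P x} : ℚ)) * (n : ℚ) = (n:ℚ) * (n : ℚ) := by
        rw [h]; ring
      exact mul_right_cancel₀ hnQ h2
    have hcountN : Fintype.card {x : Fin 2 → A // P x} = n := by exact_mod_cast hcount
    intro x y hxy
    by_contra hne
    -- build an injection from A ⊕ Unit into the subtype
    have hdiag : ∀ a : A, P ![a, a] := fun a => (heval _).mpr rfl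
    have hxyP : P ![x, y] := (heval _).mpr (by simpa using hxy)
    let F : A ⊕ Unit → {z : Fin 2 → A // P z} := fun s =>
      match s with
      | .inl a => ⟨![a, a], hdiag a⟩
      | .inr _ => ⟨![x, y], hxyP⟩
    have hFinj : Function.Injective F := by
      intro s₁ s₂ hF
      match s₁, s₂ with
      | .inl a, .inl b =>
        have : (![a, a] : Fin 2 → A) = ![b, b] := congrArg Subtype.val hF
        have hab : a = b := by simpa using congrFun this 0
        rw [hab]
      | .inl a, .inr u =>
        have : (![a, a] : Fin 2 → A) = ![x, y] := congrArg Subtype.val hF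
        have h0 := congrFun this 0
        have h1 := congrFun this 1
        simp at h0 h1
        exact absurd (h0 ▸ h1) hne
      | .inr u, .inl a =>
        have : (![x, y] : Fin 2 → A) = ![a, a] := congrArg Subtype.val hF
        have h0 := congrFun this 0
        have h1 := congrFun this 1
        simp at h0 h1
        exact absurd (h0.trans h1.symm) hne
      | .inr u, .inr v => rfl
    have hle := Fintype.card_le_of_injective F hFinj
    rw [hcountN] at hle
    have : Fintype.card (A ⊕ Unit) = Fintype.card A + 1 := by simp
    rw [this, hn, Nat.card_eq_fintype_card] at hle
    omega
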